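/- Let Σ̂ ∈ ℝ^{m×m} be symmetric positive definite and let c ∈ ℝ. Then the sublevel set {Γ ∈ ℝ^{m×m} : Γ_{ii} > 0 for all i, and ℓ(Γ) ≤ c} is bounded in the Frobenius norm, where ℓ(Γ) = Σ_{i=1}^m −2·log(Γ_{ii}) + tr(Γ Γᵀ Σ̂). -/

import Mathlib

open Matrix
open scoped MatrixOrder

/-- Squared Frobenius "norm" of a matrix. -/
private noncomputable def frobSq {m : ℕ} (A : Matrix (Fin m) (Fin m) ℝ) : ℝ :=
  ∑ i, ∑ j, (A i j) ^ 2

private lemma frobSq_nonneg {m : ℕ} (A : Matrix (Fin m) (Fin m) ℝ) : 0 ≤ frobSq A := by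
  apply Finset.sum_nonneg; intro i _; apply Finset.sum_nonneg; intro j _; positivity

private lemma trace_mul_transpose_eq_frobSq {m : ℕ} (A : Matrix (Fin m) (Fin m) ℝ) :
    Matrix.trace (A * Aᵀ) = frobSq A := by
  simp [Matrix.trace, Matrix.diag, Matrix.mul_apply, frobSq, sq]

private lemma frobSq_mul_le {m : ℕ} (A B : Matrix (Fin m) (Fin m) ℝ) :
    frobSq (A * B) ≤ frobSq A * frobSq B := by
  unfold frobSq
  calc ∑ i, ∑ j, ((A * B) i j) ^ 2
      ≤ ∑ i, ∑ j, (∑ k, (A i k) ^ 2) * (∑ k, (B k j) ^ 2) := by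
        apply Finset.sum_le_sum; intro i _
        apply Finset.sum_le_sum; intro j _
        simpa [Matrix.mul_apply] using
          Finset.sum_mul_sq_le_sq_mul_sq Finset.univ (fun k => A i k) (fun k => B k j)
    _ = (∑ i, ∑ k, (A i k) ^ 2) * (∑ j, ∑ k, (B k j) ^ 2) := by
        rw [← Finset.sum_mul_sum]
    _ = (∑ i, ∑ k, (A i k) ^ 2) * (∑ k, ∑ j, (B k j) ^ 2) := by
        congr 1
        exact Finset.sum_comm ..

open Matrix in
/-- Lemma 2: for a symmetric positive definite `Σ̂`, the sublevel set
`{Γ : Γᵢᵢ > 0 for all i, ℓ(Γ) ≤ c}` of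
`ℓ(Γ) = ∑ᵢ -2 log Γᵢᵢ + tr(Γ Γᵀ Σ̂)` is bounded in the Frobenius norm. -/
theorem stmt_5 {m : ℕ} (Sig : Matrix (Fin m) (Fin m) ℝ) (hpd : Sig.PosDef) (c : ℝ) :
    ∃ R : ℝ, ∀ Γ : Matrix (Fin m) (Fin m) ℝ,
      (∀ i, 0 < Γ i i) →
      (∑ i, -2 * Real.log (Γ i i)) + Matrix.trace (Γ * Γᵀ * Sig) ≤ c →
      Real.sqrt (∑ i, ∑ j, (Γ i j) ^ 2) ≤ R := by
  classical
  -- square root of Sig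
  obtain ⟨B, hBB, hBsymm⟩ : ∃ B : Matrix (Fin m) (Fin m) ℝ, B * B = Sig ∧ Bᵀ = B := by
    refine ⟨CFC.sqrt Sig, CFC.sqrt_mul_sqrt_self Sig hpd.posSemidef.nonneg, ?_⟩
    have h := (CFC.sqrt_nonneg Sig).posSemidef.1
    simpa [Matrix.IsHermitian, Matrix.conjTranspose_eq_transpose_of_trivial] using h
  have hBdet : B.det ≠ 0 := by
    intro h
    have : Sig.det = 0 := by rw [← hBB, Matrix.det_mul, h, mul_zero]
    exact hpd.det_pos.ne' this
  obtain ⟨C, hCB⟩ : ∃ C : Matrix (Fin m) (Fin m) ℝ, C * B = 1 :=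
    ⟨B⁻¹, Matrix.nonsing_inv_mul B (isUnit_iff_ne_zero.mpr hBdet)⟩
  -- constants
  set K : ℝ := frobSq C + 1 with hKdef
  have hK : 0 < K := by have := frobSq_nonneg C; linarith
  set ε : ℝ := 1 / K with hεdef
  have hε : 0 < ε := by positivity
  refine ⟨Real.sqrt ((2 / ε) * (c + 2 * m / ε)), ?_⟩
  intro Γ hdiag hle
  -- trace term equals frobSq (B * Γ)
  have htr : Matrix.trace (Γ * Γᵀ * Sig) = frobSq (B * Γ) := by
    have h1 : Γ * Γᵀ * Sig = Γ * Γᵀ * B * B := by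
      rw [← hBB, ← Matrix.mul_assoc]
    rw [h1, Matrix.trace_mul_comm, ← Matrix.mul_assoc, ← Matrix.mul_assoc,
      ← trace_mul_transpose_eq_frobSq (B * Γ)]
    congr 1
    rw [Matrix.transpose_mul, hBsymm, Matrix.mul_assoc, Matrix.mul_assoc]
  -- frobSq Γ ≤ K * trace term
  have hΓeq : Γ = C * (B * Γ) := by
    rw [← Matrix.mul_assoc, hCB, Matrix.one_mul]
  have hfrob_le : frobSq Γ ≤ K * Matrix.trace (Γ * Γᵀ * Sig) := by
    rw [htr]
    calc frobSq Γ = frobSq (C * (B * Γ)) := by rw [← hΓeq]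
      _ ≤ frobSq C * frobSq (B * Γ) := frobSq_mul_le _ _
      _ ≤ K * frobSq (B * Γ) := by
          apply mul_le_mul_of_nonneg_right _ (frobSq_nonneg _)
          rw [hKdef]; linarith
  have htr_ge : ε * frobSq Γ ≤ Matrix.trace (Γ * Γᵀ * Sig) := by
    rw [hεdef]
    rw [div_mul_eq_mul_div, one_mul, div_le_iff₀ hK, mul_comm]
    exact hfrob_le
  -- log term lower bound
  have hdiag_sq : ∑ i, (Γ i i) ^ 2 ≤ frobSq Γ := by
    unfold frobSq
    apply Finset.sum_le_sum; intro i _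
    have : (Γ i i) ^ 2 ≤ ∑ j, (Γ i j) ^ 2 :=
      Finset.single_le_sum (f := fun j => (Γ i j) ^ 2) (fun j _ => sq_nonneg _)
        (Finset.mem_univ i)
    exact this
  have hlog : ∀ i, -((ε / 2) * (Γ i i) ^ 2 + 2 / ε) ≤ -2 * Real.log (Γ i i) := by
    intro i
    have hl : Real.log (Γ i i) ≤ Γ i i - 1 := Real.log_le_sub_one_of_pos (hdiag i)
    have hamgm : 2 * (Γ i i) ≤ (ε / 2) * (Γ i i) ^ 2 + 2 / ε := by
      have hε2 : (0:ℝ) < ε / 2 := by linarith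
      have hinv : (ε / 2) * (2 / ε) = 1 := by field_simp
      nlinarith [sq_nonneg ((ε / 2) * Γ i i - 1), hε2, hinv]
    nlinarith
  have hsumlog : -((ε / 2) * frobSq Γ + 2 * m / ε) ≤ ∑ i, -2 * Real.log (Γ i i) := by
    calc -((ε / 2) * frobSq Γ + 2 * m / ε)
        ≤ -((ε / 2) * (∑ i, (Γ i i) ^ 2) + 2 * m / ε) := by
          have := hdiag_sq
          nlinarith
      _ = ∑ i, -((ε / 2) * (Γ i i) ^ 2 + 2 / ε) := by
          rw [Finset.sum_neg_distrib]
          congr 1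
          rw [Finset.sum_add_distrib, Finset.mul_sum]
          congr 1
          simp [Finset.sum_const, Finset.card_univ]
          ring
      _ ≤ ∑ i, -2 * Real.log (Γ i i) := Finset.sum_le_sum (fun i _ => hlog i)
  -- combine
  have hbound : frobSq Γ ≤ (2 / ε) * (c + 2 * m / ε) := by
    have h1 : -((ε / 2) * frobSq Γ + 2 * m / ε) + ε * frobSq Γ ≤ c := by
      calc -((ε / 2) * frobSq Γ + 2 * m / ε) + ε * frobSq Γ
          ≤ (∑ i, -2 * Real.log (Γ i i)) + Matrix.trace (Γ * Γᵀ * Sig) :=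
            add_le_add hsumlog htr_ge
        _ ≤ c := hle
    have h2 : (ε / 2) * frobSq Γ ≤ c + 2 * m / ε := by linarith
    calc frobSq Γ = (2 / ε) * ((ε / 2) * frobSq Γ) := by field_simp
      _ ≤ (2 / ε) * (c + 2 * m / ε) :=
        mul_le_mul_of_nonneg_left h2 (by positivity)
  exact Real.sqrt_le_sqrt hbound
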